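/- Noether invariance principle for constrained optimal control (Theorem 2): Let (x(·), u(·), ψ₀, ψ(·), λ(·)) be a Pontryagin extremal of the constrained optimal control problem on [a,b]. Suppose there exists ε > 0 and a C²-smooth one-parameter family of maps hˢ(t,x,u) = (T(t,x,u,s), X(t,x,u,s), U(t,x,u,s)), for s ∈ (−ε,ε), with h⁰(t,x,u) = (t,x,u) for all (t,x,u), such that along the extremal and for all s ∈ (−ε,ε): (i) L(t,x(t),u(t)) = L(hˢ(t,x(t),u(t))) · (d/dt) T(t,x(t),u(t),s); (ii) (d/dt) X(t,x(t),u(t),s) = φ(hˢ(t,x(t),u(t))) · (d/dt) T(t,x(t),u(t),s); (iii) ϕ(t,x(t),u(t)) = ϕ(hˢ(t,x(t),u(t))) · (d/dt) T(t,x(t),u(t),s). Then the function t ↦ ⟨ψ(t), ∂X/∂s(t,x(t),u(t),0)⟩ − H(t,x(t),u(t),ψ₀,ψ(t),λ(t)) · ∂T/∂s(t,x(t),u(t),0) is constant on [a,b]. -/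

import Mathlib

open Set RealInnerProductSpace

/-- The Hamiltonian of the constrained optimal control problem:
`H(t,x,u,ψ₀,ψ,λ) = ψ₀·L(t,x,u) + ⟨ψ, φ(t,x,u)⟩ + ⟨λ, ϕ(t,x,u)⟩`. -/
noncomputable def Ham {n r m : ℕ}
    (L : ℝ × EuclideanSpace ℝ (Fin n) × EuclideanSpace ℝ (Fin r) → ℝ)
    (φ : ℝ × EuclideanSpace ℝ (Fin n) × EuclideanSpace ℝ (Fin r) → EuclideanSpace ℝ (Fin n))
    (ϕ : ℝ × EuclideanSpace ℝ (Fin n) × EuclideanSpace ℝ (Fin r) → EuclideanSpace ℝ (Fin m))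
    (t : ℝ) (x : EuclideanSpace ℝ (Fin n)) (u : EuclideanSpace ℝ (Fin r))
    (ψ₀ : ℝ) (ψ : EuclideanSpace ℝ (Fin n)) (lam : EuclideanSpace ℝ (Fin m)) : ℝ :=
  ψ₀ * L (t, x, u) + ⟪ψ, φ (t, x, u)⟫ + ⟪lam, ϕ (t, x, u)⟫

/-- A Pontryagin extremal of the constrained optimal control problem on `[a,b]`:
`x, u, ψ, λ` differentiable, `ẋ = φ`, adjoint system `ψ̇ = −∂H/∂x`,
stationarity `∂H/∂u = 0`, and `dH/dt = ∂H/∂t`. -/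
noncomputable def IsPontryaginExtremal {n r m : ℕ}
    (L : ℝ × EuclideanSpace ℝ (Fin n) × EuclideanSpace ℝ (Fin r) → ℝ)
    (φ : ℝ × EuclideanSpace ℝ (Fin n) × EuclideanSpace ℝ (Fin r) → EuclideanSpace ℝ (Fin n))
    (ϕ : ℝ × EuclideanSpace ℝ (Fin n) × EuclideanSpace ℝ (Fin r) → EuclideanSpace ℝ (Fin m))
    (a b : ℝ)
    (x : ℝ → EuclideanSpace ℝ (Fin n)) (u : ℝ → EuclideanSpace ℝ (Fin r))
    (ψ₀ : ℝ) (ψ : ℝ → EuclideanSpace ℝ (Fin n)) (lam : ℝ → EuclideanSpace ℝ (Fin m)) : Prop :=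
  (∀ t ∈ Icc a b, DifferentiableAt ℝ x t ∧ DifferentiableAt ℝ u t ∧
      DifferentiableAt ℝ ψ t ∧ DifferentiableAt ℝ lam t) ∧
  -- control system ẋ(t) = ∂H/∂ψ = φ(t, x(t), u(t))
  (∀ t ∈ Icc a b, deriv x t = φ (t, x t, u t)) ∧
  -- adjoint system ψ̇(t) = −∂H/∂x(t, x(t), u(t), ψ₀, ψ(t), λ(t))
  (∀ t ∈ Icc a b, ∀ v : EuclideanSpace ℝ (Fin n),
      ⟪deriv ψ t, v⟫ =
        -(ψ₀ * fderiv ℝ L (t, x t, u t) (0, v, 0)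
          + ⟪ψ t, fderiv ℝ φ (t, x t, u t) (0, v, 0)⟫
          + ⟪lam t, fderiv ℝ ϕ (t, x t, u t) (0, v, 0)⟫)) ∧
  -- stationarity ∂H/∂u(t, x(t), u(t), ψ₀, ψ(t), λ(t)) = 0
  (∀ t ∈ Icc a b, ∀ v : EuclideanSpace ℝ (Fin r),
      ψ₀ * fderiv ℝ L (t, x t, u t) (0, 0, v)
        + ⟪ψ t, fderiv ℝ φ (t, x t, u t) (0, 0, v)⟫
        + ⟪lam t, fderiv ℝ ϕ (t, x t, u t) (0, 0, v)⟫ = 0) ∧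
  -- dH/dt = ∂H/∂t along the extremal
  (∀ t ∈ Icc a b,
      deriv (fun τ => Ham L φ ϕ τ (x τ) (u τ) ψ₀ (ψ τ) (lam τ)) t =
        ψ₀ * fderiv ℝ L (t, x t, u t) (1, 0, 0)
          + ⟪ψ t, fderiv ℝ φ (t, x t, u t) (1, 0, 0)⟫
          + ⟪lam t, fderiv ℝ ϕ (t, x t, u t) (1, 0, 0)⟫)

section helpers
variable {E F : Type*} [NormedAddCommGroup E] [NormedSpace ℝ E]
  [NormedAddCommGroup F] [NormedSpace ℝ F]

lemma aux1 (G : E × ℝ → F) (hG : ContDiff ℝ 2 G) {p : ℝ → E} {p' : E} {t : ℝ}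
    (hp : HasDerivAt p p' t) (s : ℝ) :
    HasDerivAt (fun τ => G (p τ, s)) (fderiv ℝ G (p t, s) (p', 0)) t := by
  have h1 : HasDerivAt (fun τ => (p τ, s)) (p', (0:ℝ)) t := hp.prodMk (hasDerivAt_const _ _)
  exact ((hG.differentiable two_ne_zero) (p t, s)).hasFDerivAt.comp_hasDerivAt t h1

lemma aux2 (G : E × ℝ → F) (hG : ContDiff ℝ 2 G) (q : E) (s₀ : ℝ) :
    HasDerivAt (fun s => G (q, s)) (fderiv ℝ G (q, s₀) (0, 1)) s₀ := by
  have h1 : HasDerivAt (fun s : ℝ => (q, s)) ((0:E), (1:ℝ)) s₀ :=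
    (hasDerivAt_const _ _).prodMk (hasDerivAt_id _)
  exact ((hG.differentiable two_ne_zero) (q, s₀)).hasFDerivAt.comp_hasDerivAt s₀ h1

lemma aux3 (G : E × ℝ → F) (hG : ContDiff ℝ 2 G) (q : E) (w : E × ℝ) (s₀ : ℝ) :
    HasDerivAt (fun s => fderiv ℝ G (q, s) w)
      (fderiv ℝ (fderiv ℝ G) (q, s₀) (0, 1) w) s₀ := by
  have hG' : ContDiff ℝ 1 (fderiv ℝ G) := hG.fderiv_right (le_refl _)
  have h1 : HasDerivAt (fun s : ℝ => (q, s)) ((0:E), (1:ℝ)) s₀ :=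
    (hasDerivAt_const _ _).prodMk (hasDerivAt_id _)
  have h2 : HasDerivAt (fun s => fderiv ℝ G (q, s))
      (fderiv ℝ (fderiv ℝ G) (q, s₀) (0, 1)) s₀ :=
    ((hG'.differentiable one_ne_zero) (q, s₀)).hasFDerivAt.comp_hasDerivAt s₀ h1
  exact h2.clm_apply (hasDerivAt_const _ _) |>.congr_deriv (by simp)

lemma aux4 (G : E × ℝ → F) (hG : ContDiff ℝ 2 G) {p : ℝ → E} {p' : E} {t : ℝ}
    (hp : HasDerivAt p p' t) (w : E × ℝ) :
    HasDerivAt (fun τ => fderiv ℝ G (p τ, 0) w)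
      (fderiv ℝ (fderiv ℝ G) (p t, 0) (p', 0) w) t := by
  have hG' : ContDiff ℝ 1 (fderiv ℝ G) := hG.fderiv_right (le_refl _)
  have h1 : HasDerivAt (fun τ => (p τ, (0:ℝ))) (p', (0:ℝ)) t := hp.prodMk (hasDerivAt_const _ _)
  have h2 : HasDerivAt (fun τ => fderiv ℝ G (p τ, 0))
      (fderiv ℝ (fderiv ℝ G) (p t, 0) (p', 0)) t :=
    ((hG'.differentiable one_ne_zero) (p t, 0)).hasFDerivAt.comp_hasDerivAt t h1
  exact h2.clm_apply (hasDerivAt_const _ _) |>.congr_deriv (by simp)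

lemma aux5 (G : E × ℝ → F) (hG : ContDiff ℝ 2 G) (q : E × ℝ) (v w : E × ℝ) :
    fderiv ℝ (fderiv ℝ G) q v w = fderiv ℝ (fderiv ℝ G) q w v := by
  have hG' : ContDiff ℝ 1 (fderiv ℝ G) := hG.fderiv_right (le_refl _)
  exact second_derivative_symmetric (fun y => ((hG.differentiable two_ne_zero) y).hasFDerivAt)
    (((hG'.differentiable one_ne_zero) q).hasFDerivAt) v w

end helpers

set_option maxHeartbeats 1000000

/-- **Noether's invariance principle for constrained optimal control problems**
(Theorem 2). If the problem data `(L, φ, ϕ)` is invariant, along a Pontryagin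
extremal, under a `C²`-smooth one-parameter family of maps
`hˢ(t,x,u) = (T(t,x,u,s), X(t,x,u,s), U(t,x,u,s))` reducing to the identity at
`s = 0`, then `⟨ψ(t), ∂X/∂s|₀⟩ − H·∂T/∂s|₀` is constant on `[a,b]`. -/
theorem noether_invariance_constrained_optimal_control
    {n r m : ℕ}
    (L : ℝ × EuclideanSpace ℝ (Fin n) × EuclideanSpace ℝ (Fin r) → ℝ)
    (φ : ℝ × EuclideanSpace ℝ (Fin n) × EuclideanSpace ℝ (Fin r) → EuclideanSpace ℝ (Fin n))
    (ϕ : ℝ × EuclideanSpace ℝ (Fin n) × EuclideanSpace ℝ (Fin r) → EuclideanSpace ℝ (Fin m))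
    (hL : ContDiff ℝ 1 L) (hφ : ContDiff ℝ 1 φ) (hϕ : ContDiff ℝ 1 ϕ)
    (a b : ℝ) (hab : a < b)
    (x : ℝ → EuclideanSpace ℝ (Fin n)) (u : ℝ → EuclideanSpace ℝ (Fin r))
    (ψ₀ : ℝ) (ψ : ℝ → EuclideanSpace ℝ (Fin n)) (lam : ℝ → EuclideanSpace ℝ (Fin m))
    (hext : IsPontryaginExtremal L φ ϕ a b x u ψ₀ ψ lam)
    -- the C²-smooth one-parameter family of maps, identity at s = 0
    (ε : ℝ) (hε : 0 < ε)
    (T : (ℝ × EuclideanSpace ℝ (Fin n) × EuclideanSpace ℝ (Fin r)) × ℝ → ℝ)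
    (X : (ℝ × EuclideanSpace ℝ (Fin n) × EuclideanSpace ℝ (Fin r)) × ℝ →
        EuclideanSpace ℝ (Fin n))
    (U : (ℝ × EuclideanSpace ℝ (Fin n) × EuclideanSpace ℝ (Fin r)) × ℝ →
        EuclideanSpace ℝ (Fin r))
    (hT : ContDiff ℝ 2 T) (hX : ContDiff ℝ 2 X) (hU : ContDiff ℝ 2 U)
    (hT0 : ∀ p : ℝ × EuclideanSpace ℝ (Fin n) × EuclideanSpace ℝ (Fin r), T (p, 0) = p.1)
    (hX0 : ∀ p : ℝ × EuclideanSpace ℝ (Fin n) × EuclideanSpace ℝ (Fin r), X (p, 0) = p.2.1)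
    (hU0 : ∀ p : ℝ × EuclideanSpace ℝ (Fin n) × EuclideanSpace ℝ (Fin r), U (p, 0) = p.2.2)
    -- invariance of the cost (i)
    (hinvL : ∀ s ∈ Ioo (-ε) ε, ∀ t ∈ Icc a b,
      L (t, x t, u t) =
        L (T ((t, x t, u t), s), X ((t, x t, u t), s), U ((t, x t, u t), s)) *
          deriv (fun τ => T ((τ, x τ, u τ), s)) t)
    -- invariance of the dynamics (ii)
    (hinvφ : ∀ s ∈ Ioo (-ε) ε, ∀ t ∈ Icc a b,
      deriv (fun τ => X ((τ, x τ, u τ), s)) t =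
        (deriv (fun τ => T ((τ, x τ, u τ), s)) t) •
          φ (T ((t, x t, u t), s), X ((t, x t, u t), s), U ((t, x t, u t), s)))
    -- invariance of the constraints (iii)
    (hinvϕ : ∀ s ∈ Ioo (-ε) ε, ∀ t ∈ Icc a b,
      ϕ (t, x t, u t) =
        (deriv (fun τ => T ((τ, x τ, u τ), s)) t) •
          ϕ (T ((t, x t, u t), s), X ((t, x t, u t), s), U ((t, x t, u t), s))) :
    -- conclusion: the Noether quantity is constant on [a,b]
    ∃ C : ℝ, ∀ t ∈ Icc a b,
      ⟪ψ t, deriv (fun s => X ((t, x t, u t), s)) 0⟫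
        - Ham L φ ϕ t (x t) (u t) ψ₀ (ψ t) (lam t) *
            deriv (fun s => T ((t, x t, u t), s)) 0 = C := by
  obtain ⟨hdiff, hdyn, hadj, hstat, hHt⟩ := hext
  set J : ℝ → ℝ := fun τ =>
    ⟪ψ τ, deriv (fun s => X ((τ, x τ, u τ), s)) 0⟫
      - Ham L φ ϕ τ (x τ) (u τ) ψ₀ (ψ τ) (lam τ) *
          deriv (fun s => T ((τ, x τ, u τ), s)) 0 with hJdef
  have hΘeq : ∀ τ : ℝ, deriv (fun s => T ((τ, x τ, u τ), s)) 0
      = fderiv ℝ T ((τ, x τ, u τ), 0) (0, 1) := fun τ => (aux2 T hT _ 0).deriv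
  have hΞeq : ∀ τ : ℝ, deriv (fun s => X ((τ, x τ, u τ), s)) 0
      = fderiv ℝ X ((τ, x τ, u τ), 0) (0, 1) := fun τ => (aux2 X hX _ 0).deriv
  have hne : Ioo (-ε) ε ∈ nhds (0:ℝ) := Ioo_mem_nhds (by linarith) hε
  have key : ∀ t ∈ Icc a b, HasDerivAt J 0 t := by
    intro t ht
    obtain ⟨hx, hu, hψd, hlamd⟩ := hdiff t ht
    have hp : HasDerivAt (fun τ => ((τ, x τ, u τ) :
        ℝ × EuclideanSpace ℝ (Fin n) × EuclideanSpace ℝ (Fin r)))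
        ((1 : ℝ), deriv x t, deriv u t) t :=
      (hasDerivAt_id t).prodMk (hx.hasDerivAt.prodMk hu.hasDerivAt)
    -- abbreviations (scalars/vectors)
    set θ := fderiv ℝ T ((t, x t, u t), 0) (0, 1) with hθdef
    set ξ := fderiv ℝ X ((t, x t, u t), 0) (0, 1) with hξdef
    set υ := fderiv ℝ U ((t, x t, u t), 0) (0, 1) with hυdef
    set v : ℝ × EuclideanSpace ℝ (Fin n) × EuclideanSpace ℝ (Fin r) := (θ, ξ, υ) with hvdef
    set θ' := fderiv ℝ (fderiv ℝ T) ((t, x t, u t), 0) (((1:ℝ), deriv x t, deriv u t), 0) (0, 1)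
      with hθ'def
    set ξ' := fderiv ℝ (fderiv ℝ X) ((t, x t, u t), 0) (((1:ℝ), deriv x t, deriv u t), 0) (0, 1)
      with hξ'def
    -- ∂T/∂t at s = 0 is 1
    have hDt1 : fderiv ℝ T ((t, x t, u t), 0) (((1:ℝ), deriv x t, deriv u t), 0) = 1 := by
      have h1 := aux1 T hT hp 0
      have h2 : (fun τ => T ((τ, x τ, u τ), 0)) = fun τ => τ := funext fun τ => hT0 _
      rw [h2] at h1
      exact h1.unique (hasDerivAt_id t)
    -- the transformed point at s = 0
    have hF0 : ((T ((t, x t, u t), 0), X ((t, x t, u t), 0), U ((t, x t, u t), 0)) :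
        ℝ × EuclideanSpace ℝ (Fin n) × EuclideanSpace ℝ (Fin r)) = (t, x t, u t) := by
      rw [hT0, hX0, hU0]
    -- s-derivative of the transformed point
    have hF : HasDerivAt (fun s => ((T ((t, x t, u t), s), X ((t, x t, u t), s),
        U ((t, x t, u t), s)) : ℝ × EuclideanSpace ℝ (Fin n) × EuclideanSpace ℝ (Fin r))) v 0 :=
      (aux2 T hT _ 0).prodMk ((aux2 X hX _ 0).prodMk (aux2 U hU _ 0))
    -- chain rules through L, φ, ϕ
    have hLF : HasDerivAt (fun s => L (T ((t, x t, u t), s), X ((t, x t, u t), s),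
        U ((t, x t, u t), s))) (fderiv ℝ L (t, x t, u t) v) 0 := by
      have h := ((hL.differentiable one_ne_zero) _).hasFDerivAt.comp_hasDerivAt 0 hF
      rwa [hF0] at h
    have hφF : HasDerivAt (fun s => φ (T ((t, x t, u t), s), X ((t, x t, u t), s),
        U ((t, x t, u t), s))) (fderiv ℝ φ (t, x t, u t) v) 0 := by
      have h := ((hφ.differentiable one_ne_zero) _).hasFDerivAt.comp_hasDerivAt 0 hF
      rwa [hF0] at h
    have hϕF : HasDerivAt (fun s => ϕ (T ((t, x t, u t), s), X ((t, x t, u t), s),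
        U ((t, x t, u t), s))) (fderiv ℝ ϕ (t, x t, u t) v) 0 := by
      have h := ((hϕ.differentiable one_ne_zero) _).hasFDerivAt.comp_hasDerivAt 0 hF
      rwa [hF0] at h
    -- s-derivatives of the t-derivatives (Schwarz symmetry)
    have hDtS : HasDerivAt (fun s => fderiv ℝ T ((t, x t, u t), s)
        (((1:ℝ), deriv x t, deriv u t), 0)) θ' 0 := by
      have h := aux3 T hT (t, x t, u t) (((1:ℝ), deriv x t, deriv u t), 0) 0
      rwa [aux5 T hT ((t, x t, u t), 0) (0, 1) (((1:ℝ), deriv x t, deriv u t), 0)] at h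
    have hDxS : HasDerivAt (fun s => fderiv ℝ X ((t, x t, u t), s)
        (((1:ℝ), deriv x t, deriv u t), 0)) ξ' 0 := by
      have h := aux3 X hX (t, x t, u t) (((1:ℝ), deriv x t, deriv u t), 0) 0
      rwa [aux5 X hX ((t, x t, u t), 0) (0, 1) (((1:ℝ), deriv x t, deriv u t), 0)] at h
    -- (i) differentiated at s = 0
    have E1 : fderiv ℝ L (t, x t, u t) v + L (t, x t, u t) * θ' = 0 := by
      have hg1 : (fun s => L (T ((t, x t, u t), s), X ((t, x t, u t), s), U ((t, x t, u t), s))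
          * fderiv ℝ T ((t, x t, u t), s) (((1:ℝ), deriv x t, deriv u t), 0))
          =ᶠ[nhds (0:ℝ)] fun _ => L (t, x t, u t) := by
        filter_upwards [hne] with s hs
        have h := hinvL s hs t ht
        rw [(aux1 T hT hp s).deriv] at h
        exact h.symm
      have hd1 : HasDerivAt (fun s => L (T ((t, x t, u t), s), X ((t, x t, u t), s),
          U ((t, x t, u t), s)) * fderiv ℝ T ((t, x t, u t), s)
          (((1:ℝ), deriv x t, deriv u t), 0))
          (fderiv ℝ L (t, x t, u t) v * fderiv ℝ T ((t, x t, u t), 0)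
            (((1:ℝ), deriv x t, deriv u t), 0)
            + L (T ((t, x t, u t), 0), X ((t, x t, u t), 0), U ((t, x t, u t), 0)) * θ') 0 :=
        hLF.mul hDtS
      have hd2 : HasDerivAt (fun s => L (T ((t, x t, u t), s), X ((t, x t, u t), s),
          U ((t, x t, u t), s)) * fderiv ℝ T ((t, x t, u t), s)
          (((1:ℝ), deriv x t, deriv u t), 0)) 0 0 :=
        (hasDerivAt_const 0 (L (t, x t, u t))).congr_of_eventuallyEq hg1
      have h := hd2.unique hd1
      rw [hDt1, hF0, mul_one] at h
      linarith [h]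
    -- (ii) differentiated at s = 0
    have E2 : ξ' = fderiv ℝ φ (t, x t, u t) v + θ' • φ (t, x t, u t) := by
      have hg2 : (fun s => fderiv ℝ X ((t, x t, u t), s) (((1:ℝ), deriv x t, deriv u t), 0))
          =ᶠ[nhds (0:ℝ)] (fun s => fderiv ℝ T ((t, x t, u t), s)
            (((1:ℝ), deriv x t, deriv u t), 0) •
            φ (T ((t, x t, u t), s), X ((t, x t, u t), s), U ((t, x t, u t), s))) := by
        filter_upwards [hne] with s hs
        have h := hinvφ s hs t ht
        rw [(aux1 T hT hp s).deriv, (aux1 X hX hp s).deriv] at h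
        exact h
      have hd1 : HasDerivAt (fun s => fderiv ℝ T ((t, x t, u t), s)
            (((1:ℝ), deriv x t, deriv u t), 0) •
            φ (T ((t, x t, u t), s), X ((t, x t, u t), s), U ((t, x t, u t), s)))
          (fderiv ℝ T ((t, x t, u t), 0) (((1:ℝ), deriv x t, deriv u t), 0) •
              fderiv ℝ φ (t, x t, u t) v
            + θ' • φ (T ((t, x t, u t), 0), X ((t, x t, u t), 0), U ((t, x t, u t), 0))) 0 :=
        hDtS.smul hφF
      have hd2 := hd1.congr_of_eventuallyEq hg2
      have h := hDxS.unique hd2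
      rw [hDt1, hF0, one_smul] at h
      exact h
    -- (iii) differentiated at s = 0
    have E3 : fderiv ℝ ϕ (t, x t, u t) v + θ' • ϕ (t, x t, u t) = 0 := by
      have hg3 : (fun s => fderiv ℝ T ((t, x t, u t), s)
            (((1:ℝ), deriv x t, deriv u t), 0) •
            ϕ (T ((t, x t, u t), s), X ((t, x t, u t), s), U ((t, x t, u t), s)))
          =ᶠ[nhds (0:ℝ)] fun _ => ϕ (t, x t, u t) := by
        filter_upwards [hne] with s hs
        have h := hinvϕ s hs t ht
        rw [(aux1 T hT hp s).deriv] at h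
        exact h.symm
      have hd1 : HasDerivAt (fun s => fderiv ℝ T ((t, x t, u t), s)
            (((1:ℝ), deriv x t, deriv u t), 0) •
            ϕ (T ((t, x t, u t), s), X ((t, x t, u t), s), U ((t, x t, u t), s)))
          (fderiv ℝ T ((t, x t, u t), 0) (((1:ℝ), deriv x t, deriv u t), 0) •
              fderiv ℝ ϕ (t, x t, u t) v
            + θ' • ϕ (T ((t, x t, u t), 0), X ((t, x t, u t), 0), U ((t, x t, u t), 0))) 0 :=
        hDtS.smul hϕF
      have hd2 : HasDerivAt (fun s => fderiv ℝ T ((t, x t, u t), s)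
            (((1:ℝ), deriv x t, deriv u t), 0) •
            ϕ (T ((t, x t, u t), s), X ((t, x t, u t), s), U ((t, x t, u t), s))) 0 0 :=
        (hasDerivAt_const 0 (ϕ (t, x t, u t))).congr_of_eventuallyEq hg3
      have h := hd2.unique hd1
      rw [hDt1, hF0, one_smul] at h
      exact h.symm
    -- decomposition of the variation vector
    have hvdec : v = θ • ((1:ℝ), (0 : EuclideanSpace ℝ (Fin n)), (0 : EuclideanSpace ℝ (Fin r)))
        + ((0:ℝ), ξ, (0 : EuclideanSpace ℝ (Fin r)))
        + ((0:ℝ), (0 : EuclideanSpace ℝ (Fin n)), υ) := by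
      rw [hvdef]
      simp [Prod.ext_iff]
    have hLdec : fderiv ℝ L (t, x t, u t) v
        = θ * fderiv ℝ L (t, x t, u t) (1, 0, 0)
          + fderiv ℝ L (t, x t, u t) (0, ξ, 0)
          + fderiv ℝ L (t, x t, u t) (0, 0, υ) := by
      rw [hvdec, map_add, map_add, map_smul, smul_eq_mul]
    have hφdec : fderiv ℝ φ (t, x t, u t) v
        = θ • fderiv ℝ φ (t, x t, u t) (1, 0, 0)
          + fderiv ℝ φ (t, x t, u t) (0, ξ, 0)
          + fderiv ℝ φ (t, x t, u t) (0, 0, υ) := by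
      rw [hvdec, map_add, map_add, map_smul]
    have hϕdec : fderiv ℝ ϕ (t, x t, u t) v
        = θ • fderiv ℝ ϕ (t, x t, u t) (1, 0, 0)
          + fderiv ℝ ϕ (t, x t, u t) (0, ξ, 0)
          + fderiv ℝ ϕ (t, x t, u t) (0, 0, υ) := by
      rw [hvdec, map_add, map_add, map_smul]
    -- the Hamiltonian along the extremal
    have hHdiff : DifferentiableAt ℝ
        (fun τ => Ham L φ ϕ τ (x τ) (u τ) ψ₀ (ψ τ) (lam τ)) t := by
      have hc : DifferentiableAt ℝ (fun τ => ((τ, x τ, u τ) :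
          ℝ × EuclideanSpace ℝ (Fin n) × EuclideanSpace ℝ (Fin r))) t := hp.differentiableAt
      simp only [Ham]
      apply DifferentiableAt.add
      apply DifferentiableAt.add
      · exact (differentiableAt_const _).mul
          (((hL.differentiable one_ne_zero).differentiableAt).comp t hc)
      · exact hψd.inner ℝ (((hφ.differentiable one_ne_zero).differentiableAt).comp t hc)
      · exact hlamd.inner ℝ (((hϕ.differentiable one_ne_zero).differentiableAt).comp t hc)
    have hHd : HasDerivAt (fun τ => Ham L φ ϕ τ (x τ) (u τ) ψ₀ (ψ τ) (lam τ))
        (deriv (fun τ => Ham L φ ϕ τ (x τ) (u τ) ψ₀ (ψ τ) (lam τ)) t) t := hHdiff.hasDerivAt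
    have E6 := hHt t ht
    -- derivatives of the Noether quantity's ingredients
    have hΘd : HasDerivAt (fun τ => deriv (fun s => T ((τ, x τ, u τ), s)) 0) θ' t := by
      have h := aux4 T hT hp ((0 : ℝ × EuclideanSpace ℝ (Fin n) × EuclideanSpace ℝ (Fin r)), 1)
      exact h.congr_of_eventuallyEq (Filter.Eventually.of_forall fun τ => hΘeq τ)
    have hΞd : HasDerivAt (fun τ => deriv (fun s => X ((τ, x τ, u τ), s)) 0) ξ' t := by
      have h := aux4 X hX hp ((0 : ℝ × EuclideanSpace ℝ (Fin n) × EuclideanSpace ℝ (Fin r)), 1)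
      exact h.congr_of_eventuallyEq (Filter.Eventually.of_forall fun τ => hΞeq τ)
    have hJd : HasDerivAt J
        ((⟪ψ t, ξ'⟫ + ⟪deriv ψ t, deriv (fun s => X ((t, x t, u t), s)) 0⟫)
          - (deriv (fun τ => Ham L φ ϕ τ (x τ) (u τ) ψ₀ (ψ τ) (lam τ)) t *
                deriv (fun s => T ((t, x t, u t), s)) 0
              + Ham L φ ϕ t (x t) (u t) ψ₀ (ψ t) (lam t) * θ')) t :=
      (hψd.hasDerivAt.inner ℝ hΞd).sub (hHd.mul hΘd)
    -- extremal equations at the relevant directions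
    have E4 := hadj t ht ξ
    have E5 := hstat t ht υ
    -- the derivative vanishes
    have hzero : (⟪ψ t, ξ'⟫ + ⟪deriv ψ t, deriv (fun s => X ((t, x t, u t), s)) 0⟫)
          - (deriv (fun τ => Ham L φ ϕ τ (x τ) (u τ) ψ₀ (ψ τ) (lam τ)) t *
                deriv (fun s => T ((t, x t, u t), s)) 0
              + Ham L φ ϕ t (x t) (u t) ψ₀ (ψ t) (lam t) * θ') = 0 := by
      rw [hΘeq t, hΞeq t, ← hθdef, ← hξdef]
      have s1 : ⟪ψ t, ξ'⟫
          = θ' * ⟪ψ t, φ (t, x t, u t)⟫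
            + (θ * ⟪ψ t, fderiv ℝ φ (t, x t, u t) (1, 0, 0)⟫
              + ⟪ψ t, fderiv ℝ φ (t, x t, u t) (0, ξ, 0)⟫
              + ⟪ψ t, fderiv ℝ φ (t, x t, u t) (0, 0, υ)⟫) := by
        rw [E2, hφdec, inner_add_right, inner_add_right, inner_add_right,
          real_inner_smul_right, real_inner_smul_right]
        ring
      have s3 : θ * ⟪lam t, fderiv ℝ ϕ (t, x t, u t) (1, 0, 0)⟫
            + ⟪lam t, fderiv ℝ ϕ (t, x t, u t) (0, ξ, 0)⟫
            + ⟪lam t, fderiv ℝ ϕ (t, x t, u t) (0, 0, υ)⟫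
            + θ' * ⟪lam t, ϕ (t, x t, u t)⟫ = 0 := by
        have h := congrArg (fun w => (inner ℝ (lam t) w : ℝ)) E3
        simp only [hϕdec, inner_add_right, real_inner_smul_right, inner_zero_right] at h
        linarith [h]
      have s2 : ψ₀ * (θ * fderiv ℝ L (t, x t, u t) (1, 0, 0)
            + fderiv ℝ L (t, x t, u t) (0, ξ, 0)
            + fderiv ℝ L (t, x t, u t) (0, 0, υ))
          + ψ₀ * L (t, x t, u t) * θ' = 0 := by
        rw [← hLdec]; linear_combination ψ₀ * E1
      have hHam : Ham L φ ϕ t (x t) (u t) ψ₀ (ψ t) (lam t)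
          = ψ₀ * L (t, x t, u t) + ⟪ψ t, φ (t, x t, u t)⟫ + ⟪lam t, ϕ (t, x t, u t)⟫ := rfl
      rw [s1, E4, E6, hHam]
      linear_combination -s2 - s3 + E5
    rw [hzero] at hJd
    exact hJd
  refine ⟨J a, fun t ht => ?_⟩
  have hcont : ContinuousOn J (Icc a b) := fun τ hτ =>
    ((key τ hτ).differentiableAt.continuousAt).continuousWithinAt
  have := constant_of_has_deriv_right_zero hcont
    (fun τ hτ => ((key τ (Ico_subset_Icc_self hτ)).hasDerivWithinAt)) t ht
  exact this
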